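/- For 1 < p < ∞ with p ≠ 2, any Auerbach basis of l^2_p is equivalent (up to permutation of rows/columns and sign changes of rows/columns) to either the standard basis {(1,0),(0,1)} or the basis {(2^{-1/p}, 2^{-1/p}), (2^{-1/p}, -2^{-1/p})}. -/

import Mathlib

open Finset

open Real Filter

/-- The `p`-norm on `ℝⁿ`. -/
noncomputable def pnorm (p : ℝ) {n : ℕ} (x : Fin n → ℝ) : ℝ :=
  (∑ j, |x j| ^ p) ^ (1 / p)

/-- sign helpers -/
lemma sgn_mul_abs {u : ℝ} (hu : u ≠ 0) : Real.sign u * |u| = u := by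
  rcases hu.lt_or_gt with h | h
  · rw [Real.sign_of_neg h, abs_of_neg h]; ring
  · rw [Real.sign_of_pos h, abs_of_pos h]; ring

lemma sgn_sq {u : ℝ} (hu : u ≠ 0) : Real.sign u * Real.sign u = 1 := by
  rcases Real.sign_apply_eq_of_ne_zero u hu with h | h <;> rw [h] <;> ring

lemma keyAux {p : ℝ} (hp : 1 < p) {n : ℕ} (x y : Fin n → ℝ)
    (h : ∀ t : ℝ, pnorm p x ≤ pnorm p (x + t • y)) :
    ∑ j, |x j| ^ (p - 2) * x j * y j = 0 := by
  have hp0 : (0:ℝ) < p := by linarith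
  set g : ℝ → ℝ := fun t => ∑ j, |x j + t * y j| ^ p with hg
  have hderiv : HasDerivAt g (∑ j, p * (|x j| ^ (p - 2) * x j * y j)) 0 := by
    apply HasDerivAt.fun_sum
    intro j _
    have h1 : HasDerivAt (fun t : ℝ => x j + t * y j) (y j) 0 := by
      simpa using (hasDerivAt_id (0:ℝ)).mul_const (y j) |>.const_add (x j)
    have h2 := hasDerivAt_abs_rpow (x j + 0 * y j) hp
    have h3 := h2.comp 0 h1
    simp only [zero_mul, add_zero] at h3 ⊢
    exact h3.congr_deriv (by ring)
  have hmin : IsLocalMin g 0 := by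
    apply Filter.Eventually.of_forall
    intro t
    have ht := h t
    have e0 : pnorm p x = (g 0) ^ (1/p) := by
      simp only [hg, pnorm, zero_mul, add_zero]
    have e1 : pnorm p (x + t • y) = (g t) ^ (1/p) := by
      simp only [hg, pnorm, Pi.add_apply, Pi.smul_apply, smul_eq_mul]
    rw [e0, e1, one_div, Real.rpow_le_rpow_iff (by positivity) (by positivity)
      (inv_pos.2 hp0)] at ht
    exact ht
  have := hmin.hasDerivAt_eq_zero hderiv
  rw [← Finset.mul_sum] at this
  exact (mul_eq_zero.1 this).resolve_left (ne_of_gt hp0)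

lemma absF {p : ℝ} (hp : 1 < p) {u : ℝ} (hu : u ≠ 0) :
    abs (|u| ^ (p - 2) * u) = |u| ^ (p - 1) := by
  rw [abs_mul, abs_of_nonneg (Real.rpow_nonneg (abs_nonneg u) _),
    ← Real.rpow_add_one (abs_ne_zero.2 hu)]
  ring_nf

lemma rpow_step {p u : ℝ} (hu : u ≠ 0) : |u| ^ (p - 2) * |u| = |u| ^ (p - 1) := by
  rw [← Real.rpow_add_one (abs_ne_zero.2 hu)]
  ring_nf

lemma Fne {p : ℝ} {u : ℝ} (hu : u ≠ 0) : |u| ^ (p - 2) * u ≠ 0 :=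
  mul_ne_zero (ne_of_gt (Real.rpow_pos_of_pos (abs_pos.2 hu) _)) hu

/-- from `S ^ (1/p) = 1` get `S = 1` -/
lemma sum_eq_one {p S : ℝ} (hp : 1 < p) (hS : 0 ≤ S) (h : S ^ (1/p) = 1) : S = 1 := by
  have hpne : p ≠ 0 := by positivity
  have := congrArg (· ^ p) h
  simpa [one_div, Real.rpow_inv_rpow hS hpne, Real.one_rpow] using this

/-- the magnitudes lemma -/
lemma mags {p : ℝ} (hp : 1 < p) (hp2 : p ≠ 2) {A B C D : ℝ}
    (hA : 0 < A) (hB : 0 < B) (hC : 0 < C) (hD : 0 < D)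
    (M1 : A ^ (p-1) * C = B ^ (p-1) * D) (M2 : C ^ (p-1) * A = D ^ (p-1) * B) :
    A = B ∧ C = D := by
  set q := p - 1 with hq
  have hq0 : 0 < q := by simp [hq]; linarith
  have hq1 : q ≠ 1 := by simp [hq]; intro h; exact hp2 (by linarith)
  have hr : 0 < A / B := div_pos hA hB
  have h1 : (A / B) ^ q = D / C := by
    rw [Real.div_rpow hA.le hB.le, div_eq_div_iff (by positivity) hC.ne']
    linarith [M1]
  have h2 : (D / C) ^ q = A / B := by
    rw [Real.div_rpow hD.le hC.le, div_eq_div_iff (by positivity) hB.ne']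
    nlinarith [M2]
  have h3 : (A / B) ^ (q * q) = A / B := by
    rw [Real.rpow_mul hr.le, h1, h2]
  have he : q * q - 1 ≠ 0 := by
    intro h
    have : q = 1 := by nlinarith
    exact hq1 this
  have h4 : (A / B) ^ (q * q - 1) = 1 := by
    rw [Real.rpow_sub hr, Real.rpow_one, h3, div_self (ne_of_gt hr)]
  have h5 : A / B = 1 := by
    have := congrArg (· ^ (q * q - 1)⁻¹) h4
    simpa [Real.rpow_rpow_inv hr.le he, Real.one_rpow] using this
  have hAB : A = B := by
    field_simp at h5; exact h5
  refine ⟨hAB, ?_⟩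
  rw [hAB] at M1
  exact mul_left_cancel₀ (ne_of_gt (Real.rpow_pos_of_pos hB _)) M1

lemma val_eq {p A : ℝ} (hp : 1 < p) (hA : 0 < A) (h : A ^ p = 1/2) :
    A = (2:ℝ) ^ (-(1/p)) := by
  have hpne : p ≠ 0 := by positivity
  have := congrArg (· ^ p⁻¹) h
  simp only [Real.rpow_rpow_inv hA.le hpne] at this
  rw [this, one_div, ← Real.rpow_neg_one (2:ℝ),
    ← Real.rpow_mul (by norm_num : (0:ℝ) ≤ 2)]
  norm_num [one_div]

lemma abs_one_of {p u : ℝ} (hp : 1 < p) (h : |u| ^ p = 1) : |u| = 1 := by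
  have hpne : p ≠ 0 := by positivity
  have := congrArg (· ^ p⁻¹) h
  simpa [Real.rpow_rpow_inv (abs_nonneg u) hpne, Real.one_rpow] using this

lemma sgn_mul_self {u : ℝ} (hu : u ≠ 0) : Real.sign u * u = |u| := by
  rcases hu.lt_or_gt with h | h
  · rw [Real.sign_of_neg h, abs_of_neg h]; ring
  · rw [Real.sign_of_pos h, abs_of_pos h]; ring

/-- `v` (rows of a matrix) is an Auerbach basis of `l^n_p`: a basis of unit vectors each
Birkhoff-James orthogonal to the span of the remaining basis vectors. -/
def IsAuerbach (p : ℝ) {n : ℕ} (v : Fin n → Fin n → ℝ) : Prop :=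
  LinearIndependent ℝ v ∧ ∀ i, pnorm p (v i) = 1 ∧
    ∀ w ∈ Submodule.span ℝ (v '' {j | j ≠ i}), pnorm p (v i) ≤ pnorm p (v i + w)

/-- Two bases (as matrices of row vectors) are equivalent if one is obtained from the other
by permuting rows or columns and negating rows or columns. -/
def EquivBases {n : ℕ} (A B : Fin n → Fin n → ℝ) : Prop :=
  ∃ (σ τ : Equiv.Perm (Fin n)) (ε δ : Fin n → ℝ),
    (∀ i, ε i = 1 ∨ ε i = -1) ∧ (∀ j, δ j = 1 ∨ δ j = -1) ∧
    ∀ i j, B i j = ε i * δ j * A (σ i) (τ j)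

/-- For `1 < p < ∞`, `p ≠ 2`, every Auerbach basis of `l^2_p` is equivalent to the standard
basis or to `{(2^{-1/p}, 2^{-1/p}), (2^{-1/p}, -2^{-1/p})}`. -/
theorem stmt7 (p : ℝ) (hp : 1 < p) (hp2 : p ≠ 2) (v : Fin 2 → Fin 2 → ℝ)
    (hv : IsAuerbach p v) :
    EquivBases v ![![1, 0], ![0, 1]] ∨
      EquivBases v
        ![![(2 : ℝ) ^ (-(1 / p)), (2 : ℝ) ^ (-(1 / p))],
          ![(2 : ℝ) ^ (-(1 / p)), -((2 : ℝ) ^ (-(1 / p)))]] := by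
  obtain ⟨-, hA⟩ := hv
  obtain ⟨hn0, ho0⟩ := hA 0
  obtain ⟨hn1, ho1⟩ := hA 1
  have hpne : p ≠ 0 := by positivity
  set a := v 0 0 with ha
  set b := v 0 1 with hb
  set c := v 1 0 with hc
  set d := v 1 1 with hd
  -- the two orthogonality equations
  have E1 : |a| ^ (p-2) * a * c + |b| ^ (p-2) * b * d = 0 := by
    have h01 : ∀ t : ℝ, pnorm p (v 0) ≤ pnorm p (v 0 + t • v 1) := fun t =>
      ho0 _ (Submodule.smul_mem _ t (Submodule.subset_span ⟨1, by simp, rfl⟩))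
    have := keyAux hp (v 0) (v 1) h01
    rwa [Fin.sum_univ_two] at this
  have E2 : |c| ^ (p-2) * c * a + |d| ^ (p-2) * d * b = 0 := by
    have h10 : ∀ t : ℝ, pnorm p (v 1) ≤ pnorm p (v 1 + t • v 0) := fun t =>
      ho1 _ (Submodule.smul_mem _ t (Submodule.subset_span ⟨0, by simp, rfl⟩))
    have := keyAux hp (v 1) (v 0) h10
    rwa [Fin.sum_univ_two] at this
  -- the norm equations
  have N0 : |a| ^ p + |b| ^ p = 1 := by
    apply sum_eq_one hp (by positivity)
    have := hn0; rwa [pnorm, Fin.sum_univ_two] at this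
  have N1 : |c| ^ p + |d| ^ p = 1 := by
    apply sum_eq_one hp (by positivity)
    have := hn1; rwa [pnorm, Fin.sum_univ_two] at this
  by_cases ha0 : a = 0
  · -- a = 0 : antidiagonal case
    left
    have hb0 : |b| = 1 := abs_one_of hp (by
      rw [ha0] at N0; simpa [Real.zero_rpow hpne] using N0)
    have hbne : b ≠ 0 := by intro h; rw [h] at hb0; simp at hb0
    have hd0 : d = 0 := by
      have : |b| ^ (p-2) * b * d = 0 := by rw [ha0] at E1; simpa using E1
      exact (mul_eq_zero.1 this).resolve_left (Fne hbne)
    have hc0 : |c| = 1 := abs_one_of hp (by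
      rw [hd0] at N1; simpa [Real.zero_rpow hpne] using N1)
    have hcne : c ≠ 0 := by intro h; rw [h] at hc0; simp at hc0
    refine ⟨Equiv.swap 0 1, Equiv.refl _, ![Real.sign c, Real.sign b], ![1, 1],
      ?_, ?_, ?_⟩
    · intro i; fin_cases i <;> simp <;>
        [exact (Real.sign_apply_eq_of_ne_zero c hcne).symm;
         exact (Real.sign_apply_eq_of_ne_zero b hbne).symm]
    · intro j; fin_cases j <;> simp
    · intro i j
      fin_cases i <;> fin_cases j <;>
        simp [← ha, ← hb, ← hc, ← hd, ha0, hd0, sgn_mul_self hcne, hc0,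
          sgn_mul_self hbne, hb0]
  · by_cases hb0 : b = 0
    · -- b = 0 : diagonal case
      left
      have ha1 : |a| = 1 := abs_one_of hp (by
        rw [hb0] at N0; simpa [Real.zero_rpow hpne] using N0)
      have hc0 : c = 0 := by
        have : |a| ^ (p-2) * a * c = 0 := by rw [hb0] at E1; simpa using E1
        exact (mul_eq_zero.1 this).resolve_left (Fne ha0)
      have hd1 : |d| = 1 := abs_one_of hp (by
        rw [hc0] at N1; simpa [Real.zero_rpow hpne] using N1)
      have hdne : d ≠ 0 := by intro h; rw [h] at hd1; simp at hd1
      refine ⟨Equiv.refl _, Equiv.refl _, ![Real.sign a, Real.sign d], ![1, 1],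
        ?_, ?_, ?_⟩
      · intro i; fin_cases i <;> simp <;>
          [exact (Real.sign_apply_eq_of_ne_zero a ha0).symm;
           exact (Real.sign_apply_eq_of_ne_zero d hdne).symm]
      · intro j; fin_cases j <;> simp
      · intro i j
        fin_cases i <;> fin_cases j <;>
          simp [← ha, ← hb, ← hc, ← hd, hb0, hc0, sgn_mul_self ha0, ha1,
            sgn_mul_self hdne, hd1]
    · -- a ≠ 0, b ≠ 0 : show c ≠ 0 and d ≠ 0
      have hc0 : c ≠ 0 := by
        intro h
        have hd1 : |d| = 1 := abs_one_of hp (by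
          rw [h] at N1; simpa [Real.zero_rpow hpne] using N1)
        have hdne : d ≠ 0 := by intro h'; rw [h'] at hd1; simp at hd1
        have : |d| ^ (p-2) * d * b = 0 := by rw [h] at E2; simpa using E2
        exact hb0 ((mul_eq_zero.1 this).resolve_left (Fne hdne))
      have hd0 : d ≠ 0 := by
        intro h
        have hc1 : |c| = 1 := abs_one_of hp (by
          rw [h] at N1; simpa [Real.zero_rpow hpne] using N1)
        have : |c| ^ (p-2) * c * a = 0 := by rw [h] at E2; simpa using E2
        exact ha0 ((mul_eq_zero.1 this).resolve_left (Fne hc0))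
      -- main case
      right
      have M1 : |a| ^ (p-1) * |c| = |b| ^ (p-1) * |d| := by
        have h' : |a| ^ (p-2) * a * c = -(|b| ^ (p-2) * b * d) := by linarith
        have := congrArg abs h'
        simp only [abs_neg, abs_mul, abs_abs,
          abs_of_nonneg (Real.rpow_nonneg (abs_nonneg a) (p-2)),
          abs_of_nonneg (Real.rpow_nonneg (abs_nonneg b) (p-2))] at this
        rw [← rpow_step ha0, ← rpow_step hb0]
        exact this
      have M2 : |c| ^ (p-1) * |a| = |d| ^ (p-1) * |b| := by
        have h' : |c| ^ (p-2) * c * a = -(|d| ^ (p-2) * d * b) := by linarith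
        have := congrArg abs h'
        simp only [abs_neg, abs_mul, abs_abs,
          abs_of_nonneg (Real.rpow_nonneg (abs_nonneg c) (p-2)),
          abs_of_nonneg (Real.rpow_nonneg (abs_nonneg d) (p-2))] at this
        rw [← rpow_step hc0, ← rpow_step hd0]
        exact this
      obtain ⟨hAB, hCD⟩ := mags hp hp2 (abs_pos.2 ha0) (abs_pos.2 hb0)
        (abs_pos.2 hc0) (abs_pos.2 hd0) M1 M2
      set t := (2:ℝ) ^ (-(1/p)) with htdef
      have hta : |a| = t := val_eq hp (abs_pos.2 ha0) (by
        rw [hAB] at N0 ⊢; linarith)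
      have htc : |c| = t := val_eq hp (abs_pos.2 hc0) (by
        rw [hCD] at N1 ⊢; linarith)
      have htb : |b| = t := by rw [← hAB, hta]
      have htd : |d| = t := by rw [← hCD, htc]
      have htpos : 0 < t := Real.rpow_pos_of_pos (by norm_num) _
      set sa := Real.sign a with hsa
      set sb := Real.sign b with hsb
      set sc := Real.sign c with hsc
      set sd := Real.sign d with hsd
      have ea : a = sa * t := by rw [← hta]; exact (sgn_mul_abs ha0).symm
      have eb : b = sb * t := by rw [← htb]; exact (sgn_mul_abs hb0).symm
      have ec : c = sc * t := by rw [← htc]; exact (sgn_mul_abs hc0).symm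
      have ed : d = sd * t := by rw [← htd]; exact (sgn_mul_abs hd0).symm
      have hsa2 : sa * sa = 1 := sgn_sq ha0
      have hsb2 : sb * sb = 1 := sgn_sq hb0
      have hsc2 : sc * sc = 1 := sgn_sq hc0
      have hsd2 : sd * sd = 1 := sgn_sq hd0
      -- the sign relation
      have srel : sa * sc + sb * sd = 0 := by
        have hE : (sa * sc + sb * sd) * (t ^ (p-2) * t * t) = 0 := by
          rw [hta, htb, ea, eb, ec, ed] at E1
          linear_combination E1
        have hK : (0:ℝ) < t ^ (p-2) * t * t := by positivity
        exact (mul_eq_zero.1 hE).resolve_right hK.ne'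
      refine ⟨Equiv.refl _, Equiv.refl _, ![1, sa * sc], ![sa, sb], ?_, ?_, ?_⟩
      · have h1 := Real.sign_apply_eq_of_ne_zero a ha0
        have h2 := Real.sign_apply_eq_of_ne_zero c hc0
        rw [← hsa] at h1; rw [← hsc] at h2
        intro i; fin_cases i
        · simp
        · rcases h1 with h | h <;> rcases h2 with h' | h' <;>
            simp [h, h']
      · have h1 := Real.sign_apply_eq_of_ne_zero a ha0
        have h2 := Real.sign_apply_eq_of_ne_zero b hb0
        rw [← hsa] at h1; rw [← hsb] at h2
        intro j; fin_cases j
        · simpa using h1.symm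
        · simpa using h2.symm
      · intro i j
        fin_cases i <;> fin_cases j <;>
          simp only [Equiv.refl_apply, Matrix.cons_val', Matrix.cons_val_zero,
            Matrix.cons_val_one, Matrix.head_cons, Matrix.empty_val',
            Matrix.cons_val_fin_one, Matrix.head_fin_const, Fin.isValue, Fin.zero_eta, Fin.mk_one,
            ← ha, ← hb, ← hc, ← hd]
        · rw [ea]; linear_combination (-t) * hsa2
        · rw [eb]; linear_combination (-t) * hsb2
        · rw [ec]; linear_combination (-(sc*sc*t)) * hsa2 + (-t) * hsc2
        · rw [ed]
          linear_combination (-(sb*sd*t)) * srel + (sd*sd*t) * hsb2 + t * hsd2
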